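/- The semigroups (T_n) and (W_n) on H² are semiconjugate via I − S: for every n ≥ 1, T_n (I − S) = (I − S) W_n, where S is the unilateral shift and T_n f(z) = f(z^n); moreover I − S is injective with dense range. -/

import Mathlib

open scoped InnerProductSpace
open Filter ContinuousLinearMap

noncomputable section

/-- The Hardy space `H²` identified with `ℓ²(ℕ)` via Maclaurin coefficients. -/
abbrev H2 := lp (fun _ : ℕ => ℂ) 2

/-- `W` is the weighted composition operator `W_n f(z) = (1+z+⋯+z^{n-1}) f(z^n)`,
expressed in Maclaurin coefficients: `(W_n f)^(nk+j) = f^(k)` for `0 ≤ j ≤ n-1`. -/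
def IsWn (n : ℕ) (W : H2 →L[ℂ] H2) : Prop :=
  ∀ (f : H2) (k j : ℕ), j < n → (W f) (n * k + j) = f k

/-- `S` is the unilateral shift `S f(z) = z f(z)` in coefficients. -/
def IsShift (S : H2 →L[ℂ] H2) : Prop :=
  ∀ f : H2, (S f) 0 = 0 ∧ ∀ m : ℕ, (S f) (m + 1) = f m

/-- `T` is the composition operator `T_n f(z) = f(z^n)` in coefficients. -/
def IsTn (n : ℕ) (T : H2 →L[ℂ] H2) : Prop :=
  ∀ f : H2, (∀ k : ℕ, (T f) (n * k) = f k) ∧ ∀ m : ℕ, ¬ n ∣ m → (T f) m = 0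

/-- An ℓ² sequence with all consecutive values equal is zero. -/
lemma eventually_const_eq_zero (g : H2) (hg : ∀ m : ℕ, g (m + 1) = g m) : g = 0 := by
  have hconst : ∀ m : ℕ, g m = g 0 := by
    intro m; induction m with
    | zero => rfl
    | succ k ih => rw [hg k, ih]
  have hsum : Summable fun i : ℕ => ‖g i‖ ^ (ENNReal.toReal 2) :=
    (lp.memℓp g).summable (by norm_num)
  have htend : Tendsto (fun i : ℕ => ‖g i‖ ^ (ENNReal.toReal 2)) atTop (nhds 0) :=
    hsum.tendsto_atTop_zero
  have hconstf : (fun i : ℕ => ‖g i‖ ^ (ENNReal.toReal 2))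
      = fun _ : ℕ => ‖g 0‖ ^ (ENNReal.toReal 2) := by
    funext i; rw [hconst i]
  rw [hconstf] at htend
  have h0 : ‖g 0‖ ^ (ENNReal.toReal 2) = 0 := tendsto_nhds_unique tendsto_const_nhds htend
  have hg0 : g 0 = 0 := by
    have : ‖g 0‖ = 0 := by
      by_contra hne
      exact hne ((Real.rpow_eq_zero (norm_nonneg _) (by norm_num)).mp h0)
    simpa using this
  apply lp.ext
  funext m
  simp only [lp.coeFn_zero, Pi.zero_apply]
  rw [hconst m, hg0]

lemma sub_apply_coeff (S : H2 →L[ℂ] H2) (f : H2) (m : ℕ) :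
    ((1 - S) f) m = f m - (S f) m := by
  rw [ContinuousLinearMap.sub_apply, ContinuousLinearMap.one_apply, lp.coeFn_sub, Pi.sub_apply]

/-- `(T_n)` and `(W_n)` are semiconjugate via `I - S`: `T_n (I - S) = (I - S) W_n`,
and `I - S` is injective with dense range. -/
theorem semiconjugate (S : H2 →L[ℂ] H2) (hS : IsShift S)
    (T W : ℕ → (H2 →L[ℂ] H2))
    (hT : ∀ n, 1 ≤ n → IsTn n (T n)) (hW : ∀ n, 1 ≤ n → IsWn n (W n)) :
    (∀ n, 1 ≤ n → (T n) ∘L (1 - S) = (1 - S) ∘L (W n)) ∧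
      Function.Injective ⇑((1 : H2 →L[ℂ] H2) - S) ∧ DenseRange ⇑((1 : H2 →L[ℂ] H2) - S) := by
  refine ⟨?_, ?_, ?_⟩
  · -- semiconjugacy
    intro n hn
    ext f m
    rw [ContinuousLinearMap.comp_apply, ContinuousLinearMap.comp_apply,
      sub_apply_coeff S (W n f) m]
    obtain ⟨hT1, hT2⟩ := hT n hn ((1 - S) f)
    rcases m with _ | m'
    · -- m = 0
      have h1 : (T n ((1 - S) f)) 0 = ((1 - S) f) 0 := by
        simpa using hT1 0
      rw [h1, sub_apply_coeff, (hS f).1, (hS (W n f)).1, sub_zero, sub_zero]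
      simpa using (hW n hn f 0 0 hn).symm
    · -- m = m' + 1
      rw [(hS (W n f)).2 m']
      obtain ⟨k, j, hjn, hm⟩ : ∃ k j, j < n ∧ n * k + j = m' + 1 :=
        ⟨(m' + 1) / n, (m' + 1) % n, Nat.mod_lt _ hn, Nat.div_add_mod (m' + 1) n⟩
      rcases Nat.eq_zero_or_pos j with hj0 | hjpos
      · -- j = 0 : m' + 1 = n * k
        rw [hj0, add_zero] at hm
        have hkpos : 1 ≤ k := by
          by_contra hk0
          push_neg at hk0
          interval_cases k
          simp at hm
        obtain ⟨k', rfl⟩ : ∃ k', k = k' + 1 := ⟨k - 1, by omega⟩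
        have hm' : n * k' + (n - 1) = m' := by
          have h1 : n * k' + n = n * (k' + 1) := by ring
          omega
        have hWm1 : (W n f) (m' + 1) = f (k' + 1) := by
          rw [← hm]
          have h2 : n * (k' + 1) = n * (k' + 1) + 0 := by omega
          rw [h2]
          exact hW n hn f (k' + 1) 0 hn
        have hWm : (W n f) m' = f k' := by
          rw [← hm']
          exact hW n hn f k' (n - 1) (by omega)
        have hLHS : (T n ((1 - S) f)) (m' + 1) = ((1 - S) f) (k' + 1) := by
          rw [← hm]; exact hT1 (k' + 1)
        rw [hLHS, hWm1, hWm, sub_apply_coeff, (hS f).2 k']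
      · -- 1 ≤ j
        have hndvd : ¬ n ∣ (m' + 1) := by
          rintro ⟨c, hc⟩
          have hkc : k < c := by
            have : n * k < n * c := by omega
            exact Nat.lt_of_mul_lt_mul_left this
          have : n * (k + 1) ≤ n * c := Nat.mul_le_mul_left n hkc
          have hnk : n * (k + 1) = n * k + n := by ring
          omega
        have hLHS : (T n ((1 - S) f)) (m' + 1) = 0 := hT2 _ hndvd
        have hWm1 : (W n f) (m' + 1) = f k := by rw [← hm]; exact hW n hn f k j hjn
        have hm'' : n * k + (j - 1) = m' := by omega
        have hWm : (W n f) m' = f k := by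
          rw [← hm'']; exact hW n hn f k (j - 1) (by omega)
        rw [hLHS, hWm1, hWm, sub_self]
  · -- injectivity
    rw [injective_iff_map_eq_zero]
    intro f hf
    apply eventually_const_eq_zero
    intro m
    have : ((1 - S) f) (m + 1) = 0 := by rw [hf]; simp [lp.coeFn_zero]
    rw [sub_apply_coeff, (hS f).2 m, sub_eq_zero] at this
    exact this
  · -- dense range
    set K : Submodule ℂ H2 := LinearMap.range (((1 : H2 →L[ℂ] H2) - S : H2 →L[ℂ] H2) : H2 →ₗ[ℂ] H2)
    have hKbot : Kᗮ = ⊥ := by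
      rw [Submodule.eq_bot_iff]
      intro g hg
      apply eventually_const_eq_zero
      intro m
      have hmem : (1 - S) (lp.single 2 m 1) ∈ K := LinearMap.mem_range_self _ _
      have hinner : ⟪(1 - S) (lp.single 2 m (1 : ℂ)), g⟫_ℂ = 0 :=
        (Submodule.mem_orthogonal K g).1 hg _ hmem
      have hSe : S (lp.single 2 m (1 : ℂ)) = lp.single 2 (m + 1) (1 : ℂ) := by
        apply lp.ext
        funext k
        rcases k with _ | k'
        · rw [(hS _).1, lp.single_apply_ne _ _ _ (by omega)]
        · rw [(hS _).2 k', lp.single_apply, lp.single_apply]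
          by_cases h : k' = m
          · subst h; simp
          · rw [Pi.single_apply, Pi.single_apply, if_neg h, if_neg (by omega)]
      rw [ContinuousLinearMap.sub_apply, ContinuousLinearMap.one_apply, hSe,
        inner_sub_left, lp.inner_single_left, lp.inner_single_left] at hinner
      have h2 : (g : ℕ → ℂ) m - g (m + 1) = 0 := by
        simpa [RCLike.inner_apply] using hinner
      exact (sub_eq_zero.mp h2).symm
    have hKtop : K.topologicalClosure = ⊤ := Submodule.topologicalClosure_eq_top_iff.mpr hKbot
    have hdense : Dense (K : Set H2) := by
      rw [Submodule.dense_iff_topologicalClosure_eq_top]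
      exact hKtop
    have : (K : Set H2) = Set.range ⇑((1 : H2 →L[ℂ] H2) - S) := by
      ext x; simp [K, LinearMap.mem_range]
    rwa [this] at hdense
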